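/- Let μ₁,…,μ_K be probability measures, X₁ⁿ,…,X_Kⁿ (n ≤ N) i.i.d. draws from the product μ = μ₁×⋯×μ_K, and φ a square μ-integrable function. Then the variance of the product-form estimator μ_×^N(φ) = N^{-K} ∑_{n∈[N]^K} φ(X^n) is bounded above by the variance of the standard Monte Carlo estimator μ^N(φ) = N^{-1} ∑_{n=1}^N φ(X₁ⁿ,…,X_Kⁿ), for every N > 0. -/

import Mathlib

open MeasureTheory ProbabilityTheory Set
open scoped ENNReal NNReal

-- variance is invariant under measure-preserving composition
lemma var_comp_mp {Ω α : Type*} [MeasurableSpace Ω] [MeasurableSpace α]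
    {P : Measure Ω} {ν : Measure α} [IsProbabilityMeasure P] [IsProbabilityMeasure ν]
    {T : Ω → α} (hT : MeasurePreserving T P ν) {F : α → ℝ} (hF : MemLp F 2 ν) :
    variance (fun ω => F (T ω)) P = variance F ν := by
  have hFT : MemLp (fun ω => F (T ω)) 2 P := hF.comp_measurePreserving hT
  have key : ∀ G : α → ℝ, AEStronglyMeasurable G ν →
      ∫ ω, G (T ω) ∂P = ∫ a, G a ∂ν := by
    intro G hG
    rw [← hT.map_eq] at hG ⊢
    exact (integral_map hT.measurable.aemeasurable hG).symm
  rw [variance_eq_sub hFT, variance_eq_sub hF]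
  have h1 : ∫ ω, F (T ω) ∂P = ∫ a, F a ∂ν := key F hF.1
  have h2 : ∫ ω, (F (T ω))^2 ∂P = ∫ a, (F a)^2 ∂ν := key (fun a => (F a)^2) (hF.1.pow 2)
  simp only [Pi.pow_apply]
  rw [h1, h2]

section Aux
variable {N K : ℕ} {E : Fin K → Type*} [∀ k, MeasurableSpace (E k)]

/-- standard MC estimator as a function of the samples -/
noncomputable def Zstd (N : ℕ) (φ : (∀ k, E k) → ℝ) : (Fin N → ∀ k, E k) → ℝ :=
  fun a => (N : ℝ)⁻¹ * ∑ n : Fin N, φ (a n)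

/-- product-form estimator as a function of the samples -/
noncomputable def Yprod (N : ℕ) (φ : (∀ k, E k) → ℝ) : (Fin N → ∀ k, E k) → ℝ :=
  fun a => ((N : ℝ) ^ K)⁻¹ * ∑ m : Fin K → Fin N, φ (fun k => a (m k) k)

lemma int_comp_mp {α β : Type*} [MeasurableSpace α] [MeasurableSpace β]
    {ν : Measure α} {ν' : Measure β} {T : α → β} (hT : MeasurePreserving T ν ν')
    {G : β → ℝ} (hG : AEStronglyMeasurable G ν') :
    ∫ a, G (T a) ∂ν = ∫ b, G b ∂ν' := by
  rw [← hT.map_eq] at hG ⊢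
  exact (integral_map hT.measurable.aemeasurable hG).symm

end Aux

section Core
variable {N K : ℕ} [NeZero N] {E : Fin K → Type*} [∀ k, MeasurableSpace (E k)]
  (μ : ∀ k, Measure (E k)) [∀ k, IsProbabilityMeasure (μ k)]

-- from previous steps (assumed available): mp_eval, mp_shift
lemma mp_eval' {ι : Type*} [Fintype ι] {α : ι → Type*} [∀ i, MeasurableSpace (α i)]
    (ν : ∀ i, Measure (α i)) [∀ i, IsProbabilityMeasure (ν i)] (n : ι) :
    MeasurePreserving (fun a : ∀ i, α i => a n) (Measure.pi ν) (ν n) := by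
  classical
  refine ⟨measurable_pi_apply n, ?_⟩
  ext s hs
  rw [Measure.map_apply (measurable_pi_apply n) hs, Set.eval_preimage, Measure.pi_pi]
  rw [Fintype.prod_eq_single n (fun m hm => by simp [Function.update_of_ne hm])]
  simp

lemma mp_shift' (v : Fin K → Fin N) :
    MeasurePreserving (fun (a : Fin N → ∀ k, E k) (n : Fin N) (k : Fin K) => a (n + v k) k)
      (Measure.pi (fun _ : Fin N => Measure.pi μ)) (Measure.pi (fun _ : Fin N => Measure.pi μ)) := by
  classical
  have hTmeas : Measurable (fun (a : Fin N → ∀ k, E k) (n : Fin N) (k : Fin K) => a (n + v k) k) :=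
    measurable_pi_lambda _ fun n => measurable_pi_lambda _ fun k =>
      (measurable_pi_apply k).comp (measurable_pi_apply (n + v k))
  refine ⟨hTmeas, ?_⟩
  refine (Measure.pi_eq_generateFrom
    (C := fun _ : Fin N => Set.pi univ '' Set.pi univ fun (k : Fin K) => {s : Set (E k) | MeasurableSet s})
    (fun _ => generateFrom_pi) (fun _ => isPiSystem_pi) (fun _ => ?_) ?_).symm
  · refine ⟨fun _ => univ, fun _ => ⟨fun _ => univ, fun k _ => MeasurableSet.univ, by simp⟩, ?_, ?_⟩
    · intro _; simp [measure_lt_top]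
    · simp [Set.iUnion_const]
  · intro s hs
    choose t ht hteq using hs
    have hmeas_t : ∀ n k, MeasurableSet (t n k) := fun n k => ht n k (mem_univ k)
    have hpre : (fun (a : Fin N → ∀ k, E k) (n : Fin N) (k : Fin K) => a (n + v k) k) ⁻¹'
        (univ.pi s) = univ.pi (fun m => univ.pi fun k => t (m - v k) k) := by
      ext a
      simp only [mem_preimage, mem_univ_pi]
      constructor
      · intro h m k
        have := h (m - v k)
        rw [← hteq (m - v k), mem_univ_pi] at this
        simpa [sub_add_cancel] using this k
      · intro h n
        rw [← hteq n, mem_univ_pi]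
        intro k
        simpa [add_sub_cancel_right] using h (n + v k) k
    rw [Measure.map_apply hTmeas (MeasurableSet.univ_pi (fun n => by
        rw [← hteq n]; exact MeasurableSet.univ_pi (fun k => hmeas_t n k))), hpre,
      Measure.pi_pi]
    simp_rw [Measure.pi_pi]
    have hRHS : ∀ n, (Measure.pi μ) (s n) = ∏ k, μ k (t n k) := fun n => by
      rw [← hteq n, Measure.pi_pi]
    simp_rw [hRHS]
    calc (∏ m, ∏ k, μ k (t (m - v k) k))
        = ∏ k, ∏ m, μ k (t (m - v k) k) := Finset.prod_comm
      _ = ∏ k, ∏ n, μ k (t n k) :=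
          Finset.prod_congr rfl fun k _ => by
            simpa using Equiv.prod_comp (Equiv.subRight (v k)) (fun n => μ k (t n k))
      _ = ∏ n, ∏ k, μ k (t n k) := Finset.prod_comm

lemma memℒp_Yprod (φ : (∀ k, E k) → ℝ) (hL2 : MemLp φ 2 (Measure.pi μ)) :
    MemLp (Yprod N φ) 2 (Measure.pi (fun _ : Fin N => Measure.pi μ)) := by
  have hm : ∀ mm : Fin K → Fin N, MemLp (fun a : Fin N → ∀ k, E k => φ (fun k => a (mm k) k)) 2
      (Measure.pi (fun _ : Fin N => Measure.pi μ)) := by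
    intro mm
    have h1 := ((hL2.comp_measurePreserving
        (mp_eval' (fun _ : Fin N => Measure.pi μ) (0 : Fin N))).comp_measurePreserving
        (mp_shift' μ (fun k => mm k - 0)))
    simpa only [Function.comp_def, sub_zero, zero_add] using h1
  have := (memLp_finset_sum' Finset.univ (fun mm _ => hm mm)).const_mul (((N:ℝ)^K)⁻¹)
  unfold Yprod
  simpa [Finset.sum_apply] using this

lemma core_ineq (φ : (∀ k, E k) → ℝ) (hL2 : MemLp φ 2 (Measure.pi μ)) :
    variance (Yprod N φ) (Measure.pi (fun _ : Fin N => Measure.pi μ))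
      ≤ variance (Zstd N φ) (Measure.pi (fun _ : Fin N => Measure.pi μ)) := by
  classical
  set π : Measure (Fin N → ∀ k, E k) := Measure.pi (fun _ : Fin N => Measure.pi μ) with hπdef
  haveI : IsProbabilityMeasure π := by rw [hπdef]; infer_instance
  set T : (Fin K → Fin N) → (Fin N → ∀ k, E k) → (Fin N → ∀ k, E k) :=
    fun v a n k => a (n + v k) k with hTdef
  have hT : ∀ v, MeasurePreserving (T v) π π := fun v => mp_shift' μ v
  have hNne : (N : ℝ) ≠ 0 := Nat.cast_ne_zero.2 (NeZero.ne N)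
  have hNKne : ((N : ℝ) ^ K) ≠ 0 := pow_ne_zero _ hNne
  -- Z is L²
  have hZ2 : MemLp (Zstd N φ) 2 π := by
    have h1 : ∀ n : Fin N, MemLp (fun a : Fin N → ∀ k, E k => φ (a n)) 2 π :=
      fun n => hL2.comp_measurePreserving (mp_eval' (fun _ : Fin N => Measure.pi μ) n)
    have := (memLp_finset_sum' Finset.univ (fun n _ => h1 n)).const_mul ((N:ℝ)⁻¹)
    unfold Zstd
    simpa [Finset.sum_apply] using this
  have hZT : ∀ v, MemLp (fun a => Zstd N φ (T v a)) 2 π :=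
    fun v => hZ2.comp_measurePreserving (hT v)
  -- averaging identity
  have hYavg : ∀ a, Yprod N φ a
      = ((N : ℝ) ^ K)⁻¹ * ∑ v : Fin K → Fin N, Zstd N φ (T v a) := by
    intro a
    have inner : ∀ n : Fin N,
        (∑ v : Fin K → Fin N, φ (fun k => a (n + v k) k))
          = ∑ m : Fin K → Fin N, φ (fun k => a (m k) k) := by
      intro n
      simpa using Equiv.sum_comp (Equiv.piCongrRight fun _ : Fin K => Equiv.addLeft n)
        (fun m : Fin K → Fin N => φ (fun k => a (m k) k))
    have : (∑ v : Fin K → Fin N, Zstd N φ (T v a))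
        = (N : ℝ)⁻¹ * ((N : ℝ) * ∑ m : Fin K → Fin N, φ (fun k => a (m k) k)) := by
      calc (∑ v : Fin K → Fin N, Zstd N φ (T v a))
          = (N : ℝ)⁻¹ * ∑ v : Fin K → Fin N, ∑ n : Fin N, φ (fun k => a (n + v k) k) := by
            rw [Finset.mul_sum]; rfl
        _ = (N : ℝ)⁻¹ * ∑ n : Fin N, ∑ v : Fin K → Fin N, φ (fun k => a (n + v k) k) := by
            rw [Finset.sum_comm]
        _ = (N : ℝ)⁻¹ * ∑ n : Fin N, ∑ m : Fin K → Fin N, φ (fun k => a (m k) k) := by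
            simp_rw [inner]
        _ = (N : ℝ)⁻¹ * ((N : ℝ) * ∑ m : Fin K → Fin N, φ (fun k => a (m k) k)) := by
            rw [Finset.sum_const, Finset.card_univ, Fintype.card_fin, nsmul_eq_mul]
    rw [this, show ((N:ℝ))⁻¹ * ((N:ℝ) * ∑ m : Fin K → Fin N, φ (fun k => a (m k) k))
        = ∑ m : Fin K → Fin N, φ (fun k => a (m k) k) from by
      rw [← mul_assoc, inv_mul_cancel₀ hNne, one_mul]]
    rfl
  have hYeq : Yprod N φ = fun a => ((N : ℝ) ^ K)⁻¹ * ∑ v : Fin K → Fin N, Zstd N φ (T v a) :=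
    funext hYavg
  have hY2 : MemLp (Yprod N φ) 2 π := by
    rw [hYeq]
    have := (memLp_finset_sum' Finset.univ (fun v _ => hZT v)).const_mul (((N:ℝ)^K)⁻¹)
    simpa [Finset.sum_apply] using this
  -- mean
  set m : ℝ := ∫ a, Zstd N φ a ∂π with hmdef
  have hmT : ∀ v, ∫ a, Zstd N φ (T v a) ∂π = m := fun v => int_comp_mp (hT v) hZ2.1
  have hcard : (Fintype.card (Fin K → Fin N) : ℝ) = (N : ℝ) ^ K := by
    simp [Fintype.card_fun]
  have hYmean : ∫ a, Yprod N φ a ∂π = m := by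
    rw [hYeq]
    rw [integral_const_mul, integral_finset_sum _ (fun v _ => (hZT v).integrable one_le_two)]
    simp_rw [hmT]
    rw [Finset.sum_const, Finset.card_univ, nsmul_eq_mul, hcard, ← mul_assoc,
      inv_mul_cancel₀ hNKne, one_mul]
  -- centered function
  set W : (Fin N → ∀ k, E k) → ℝ := fun a => Zstd N φ a - m with hWdef
  have hW2 : MemLp W 2 π := hZ2.sub (memLp_const m)
  have hWT : ∀ v, MemLp (fun a => W (T v a)) 2 π :=
    fun v => hW2.comp_measurePreserving (hT v)
  set σ2 : ℝ := ∫ a, (W a) ^ 2 ∂π with hσ2def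
  have hσ2nonneg : 0 ≤ σ2 := integral_nonneg fun a => sq_nonneg _
  have hWsq : ∀ v, ∫ a, (W (T v a)) ^ 2 ∂π = σ2 :=
    fun v => int_comp_mp (hT v) (hW2.1.pow 2)
  have hnormsq : ∀ x : ℝ, ‖x‖ ^ (2:ℝ) = x ^ 2 := by
    intro x
    rw [Real.norm_eq_abs, show (2:ℝ) = ((2:ℕ):ℝ) by norm_num, Real.rpow_natCast, sq_abs]
  have hnorm_int : ∀ v, ∫ a, ‖W (T v a)‖ ^ (2:ℝ) ∂π = σ2 := by
    intro v
    simp_rw [hnormsq]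
    exact hWsq v
  -- integrability of products
  have hprod : ∀ v w, Integrable (fun a => W (T v a) * W (T w a)) π := by
    intro v w
    have h2 : (1 : ℝ≥0∞) / 1 = 1 / 2 + 1 / 2 := by
      rw [ENNReal.add_halves, one_div_one]
    exact memLp_one_iff_integrable.mp ((hWT w).smul (hWT v) (r := 1))
  -- Cauchy-Schwarz bound on each term
  have hterm : ∀ v w, ∫ a, W (T v a) * W (T w a) ∂π ≤ σ2 := by
    intro v w
    have habs : Integrable (fun a => ‖W (T v a)‖ * ‖W (T w a)‖) π := by
      simpa [abs_mul, Real.norm_eq_abs] using (hprod v w).abs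
    have h1 : ∫ a, W (T v a) * W (T w a) ∂π ≤ ∫ a, ‖W (T v a)‖ * ‖W (T w a)‖ ∂π := by
      refine integral_mono (hprod v w) habs (fun a => ?_)
      calc W (T v a) * W (T w a) ≤ |W (T v a) * W (T w a)| := le_abs_self _
        _ = ‖W (T v a)‖ * ‖W (T w a)‖ := by rw [abs_mul, Real.norm_eq_abs, Real.norm_eq_abs]
    have hpq : Real.HolderConjugate 2 2 := by constructor <;> norm_num
    have hof : (ENNReal.ofReal 2) = (2 : ℝ≥0∞) := by
      simp [ENNReal.ofReal_ofNat]
    have hWT2 : ∀ u, MemLp (fun a => W (T u a)) (ENNReal.ofReal 2) π := by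
      intro u; rw [hof]; exact hWT u
    have h2 := integral_mul_norm_le_Lp_mul_Lq (μ := π) hpq (hWT2 v) (hWT2 w)
    rw [hnorm_int v, hnorm_int w] at h2
    have h3 : σ2 ^ (1/(2:ℝ)) * σ2 ^ (1/(2:ℝ)) = σ2 := by
      rw [← Real.rpow_add' hσ2nonneg (by norm_num)]
      norm_num
    exact h1.trans (h2.trans_eq h3)
  -- compute variance of Y
  have hvarY : variance (Yprod N φ) π
      = (((N : ℝ) ^ K)⁻¹) ^ 2 * ∑ v : Fin K → Fin N, ∑ w : Fin K → Fin N,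
          ∫ a, W (T v a) * W (T w a) ∂π := by
    rw [variance_eq_integral hY2.1.aemeasurable]
    change ∫ a, (((Yprod N φ - fun _ => ∫ a, Yprod N φ a ∂π) ^ 2 : (Fin N → ∀ k, E k) → ℝ)) a ∂π = _
    have hfun : (Yprod N φ - fun _ => ∫ a, Yprod N φ a ∂π) ^ 2
        = fun a => (((N : ℝ) ^ K)⁻¹) ^ 2 * ∑ v : Fin K → Fin N, ∑ w : Fin K → Fin N,
            W (T v a) * W (T w a) := by
      funext a
      have hD : Yprod N φ a - (∫ a, Yprod N φ a ∂π)
          = ((N : ℝ) ^ K)⁻¹ * ∑ v : Fin K → Fin N, W (T v a) := by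
        rw [hYmean, hYavg a]
        simp only [hWdef]
        rw [Finset.sum_sub_distrib, mul_sub, Finset.sum_const, Finset.card_univ, nsmul_eq_mul,
          hcard, ← mul_assoc, inv_mul_cancel₀ hNKne, one_mul]
      simp only [Pi.pow_apply, Pi.sub_apply]
      rw [hD, mul_pow, pow_two (∑ v : Fin K → Fin N, W (T v a)), Finset.sum_mul_sum]
    rw [hfun]
    rw [integral_const_mul, integral_finset_sum _ (fun v _ =>
      integrable_finset_sum _ (fun w _ => hprod v w))]
    congr 1
    exact Finset.sum_congr rfl fun v _ =>
      integral_finset_sum _ (fun w _ => hprod v w)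
  -- compute variance of Z
  have hvarZ : variance (Zstd N φ) π = σ2 := by
    rw [variance_eq_integral hZ2.1.aemeasurable]
  rw [hvarY, hvarZ]
  calc (((N : ℝ) ^ K)⁻¹) ^ 2 * ∑ v : Fin K → Fin N, ∑ w : Fin K → Fin N,
        ∫ a, W (T v a) * W (T w a) ∂π
      ≤ (((N : ℝ) ^ K)⁻¹) ^ 2 * ∑ _v : Fin K → Fin N, ∑ _w : Fin K → Fin N, σ2 := by
        refine mul_le_mul_of_nonneg_left ?_ (by positivity)
        refine Finset.sum_le_sum fun v _ => Finset.sum_le_sum fun w _ => hterm v w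
    _ = σ2 := by
        rw [Finset.sum_const, Finset.sum_const, Finset.card_univ, smul_smul, nsmul_eq_mul,
          Nat.cast_mul, hcard]
        field_simp
  
end Core


/-- Variance domination of the product-form estimator: with `N` i.i.d. samples from the product
`μ = μ₁ × ⋯ × μ_K` and `φ` square-integrable w.r.t. `μ`, the variance of the product-form
estimator `μ_×^N(φ)` is at most the variance of the standard Monte Carlo estimator `μ^N(φ)`. -/
theorem stmt1
    {Ω : Type*} [MeasurableSpace Ω] (P : Measure Ω) [IsProbabilityMeasure P]
    {K : ℕ} {E : Fin K → Type*} [∀ k, MeasurableSpace (E k)]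
    (μ : ∀ k, Measure (E k)) [∀ k, IsProbabilityMeasure (μ k)]
    (N : ℕ) (hN : 0 < N)
    (X : Fin N → Ω → ∀ k, E k) (hXmeas : ∀ n, Measurable (X n))
    (hlaw : Measure.map (fun ω (n : Fin N) => X n ω) P
      = Measure.pi (fun _ : Fin N => Measure.pi μ))
    (φ : (∀ k, E k) → ℝ) (hφ : Measurable φ)
    (hL2 : MemLp φ 2 (Measure.pi μ)) :
    variance (fun ω => ((N : ℝ) ^ K)⁻¹ * ∑ n : Fin K → Fin N, φ (fun k => X (n k) ω k)) P
      ≤ variance (fun ω => (N : ℝ)⁻¹ * ∑ n : Fin N, φ (X n ω)) P := by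
  haveI : NeZero N := ⟨hN.ne'⟩
  haveI : IsProbabilityMeasure (Measure.pi (fun _ : Fin N => Measure.pi μ)) := by infer_instance
  have hS : MeasurePreserving (fun ω (n : Fin N) => X n ω) P
      (Measure.pi (fun _ : Fin N => Measure.pi μ)) :=
    ⟨measurable_pi_lambda _ hXmeas, hlaw⟩
  have hZ2 : MemLp (Zstd N φ) 2 (Measure.pi (fun _ : Fin N => Measure.pi μ)) := by
    have h1 : ∀ n : Fin N, MemLp (fun a : Fin N → ∀ k, E k => φ (a n)) 2
        (Measure.pi (fun _ : Fin N => Measure.pi μ)) :=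
      fun n => hL2.comp_measurePreserving (mp_eval' (fun _ : Fin N => Measure.pi μ) n)
    have := (memLp_finset_sum' Finset.univ (fun n _ => h1 n)).const_mul ((N:ℝ)⁻¹)
    unfold Zstd
    simpa [Finset.sum_apply] using this
  have hY2 : MemLp (Yprod N φ) 2 (Measure.pi (fun _ : Fin N => Measure.pi μ)) :=
    memℒp_Yprod μ φ hL2
  show variance (fun ω => Yprod N φ (fun n => X n ω)) P
      ≤ variance (fun ω => Zstd N φ (fun n => X n ω)) P
  rw [var_comp_mp hS hY2, var_comp_mp hS hZ2]
  exact core_ineq μ φ hL2
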